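/- (Performance Difference Lemma) For an episodic MDP (S,A,H,P,r), any two policies π and π′, and any state s ∈ S, V_1^π(s) − V_1^{π′}(s) = E_{π′}[ Σ_{h=1}^H ⟨ Q_h^π(S_h,·), π_h(·|S_h) − π′_h(·|S_h) ⟩_A | S_1 = s ], where the trajectory (S_h,A_h) inside the expectation is generated by policy π′ starting from S_1 = s, and ⟨·,·⟩_A denotes the inner product (sum) over the finite action set A. -/

import Mathlib

open MeasureTheory ProbabilityTheory Finset
open scoped NNReal ENNReal

noncomputable section

/-- Bellman operator `T_h` (one-step backup): `(T_h f)(x,a) = r_h(x,a) + E_{x'∼P_h(·|x,a)} f(x')`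
for `h ≠ H`, and `(T_H f)(x,a) = r_H(x,a)`. -/
def bellman {S A : Type*} [MeasurableSpace S] [MeasurableSpace A] (H : ℕ) (r : ℕ → S → A → ℝ)
    (P : ℕ → Kernel (S × A) S) (h : ℕ) (f : S → ℝ) : S → A → ℝ :=
  fun x a => if h = H then r h x a else r h x a + ∫ x', f x' ∂((P h) (x, a))

/-- Truncation operator `K_m f = min (max (f, 0), m)`. -/
def trunc {α : Type*} (m : ℝ) (f : α → ℝ) : α → ℝ := fun x => min (max (f x) 0) m

/-- Truncation operator `K_m` for functions of a state-action pair. -/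
def truncQ {S A : Type*} (m : ℝ) (f : S → A → ℝ) : S → A → ℝ :=
  fun x a => min (max (f x a) 0) m

/-- `(vmax f)(x) = max_{a ∈ A} f(x,a)`. -/
def vmax {S A : Type*} [Fintype A] [Nonempty A] (f : S → A → ℝ) : S → ℝ :=
  fun x => ⨆ a, f x a

/-- Operator `T_h^* f = T_h K_{H-h} (max_a f(·,a))`. -/
def bellmanStar {S A : Type*} [MeasurableSpace S] [MeasurableSpace A] [Fintype A] [Nonempty A]
    (H : ℕ) (r : ℕ → S → A → ℝ) (P : ℕ → Kernel (S × A) S) (h : ℕ)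
    (f : S → A → ℝ) : S → A → ℝ :=
  bellman H r P h (trunc ((H : ℝ) - h) (vmax f))

/-- Backward recursion for the optimal Q-function. -/
def Qback {S A : Type*} [MeasurableSpace S] [MeasurableSpace A] [Fintype A] [Nonempty A]
    (H : ℕ) (r : ℕ → S → A → ℝ) (P : ℕ → Kernel (S × A) S) : ℕ → S → A → ℝ
  | 0 => fun _ _ => 0
  | k + 1 => bellmanStar H r P (H - k) (Qback H r P k)

/-- Optimal Q-function `Q_h^*` (with `Q_{H+1}^* = 0`), via `Q_h^* = T_h^* Q_{h+1}^*`. -/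
def Qstar {S A : Type*} [MeasurableSpace S] [MeasurableSpace A] [Fintype A] [Nonempty A]
    (H : ℕ) (r : ℕ → S → A → ℝ) (P : ℕ → Kernel (S × A) S) (h : ℕ) : S → A → ℝ :=
  Qback H r P (H + 1 - h)

/-- Optimal value function `V_h^* = max_a Q_h^*(·,a)`. -/
def Vstar {S A : Type*} [MeasurableSpace S] [MeasurableSpace A] [Fintype A] [Nonempty A]
    (H : ℕ) (r : ℕ → S → A → ℝ) (P : ℕ → Kernel (S × A) S) (h : ℕ) : S → ℝ :=
  vmax (Qstar H r P h)

/-- Backward recursion for the value function of a policy (Bellman equation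
`V_h^π(x) = Σ_a π_h(a|x) (T_h V_{h+1}^π)(x,a)`). -/
def Vback {S A : Type*} [MeasurableSpace S] [MeasurableSpace A] [Fintype A] [Nonempty A]
    (H : ℕ) (r : ℕ → S → A → ℝ) (P : ℕ → Kernel (S × A) S)
    (π : ℕ → S → A → ℝ) : ℕ → S → ℝ
  | 0 => fun _ => 0
  | k + 1 => fun x => ∑ a, π (H - k) x a * bellman H r P (H - k) (Vback H r P π k) x a

/-- Value function `V_h^π` of a policy (with `V_{H+1}^π = 0`). -/
def Vpi {S A : Type*} [MeasurableSpace S] [MeasurableSpace A] [Fintype A] [Nonempty A]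
    (H : ℕ) (r : ℕ → S → A → ℝ) (P : ℕ → Kernel (S × A) S)
    (π : ℕ → S → A → ℝ) (h : ℕ) : S → ℝ :=
  Vback H r P π (H + 1 - h)

/-- Q-function `Q_h^π = T_h V_{h+1}^π` of a policy. -/
def Qpi {S A : Type*} [MeasurableSpace S] [MeasurableSpace A] [Fintype A] [Nonempty A]
    (H : ℕ) (r : ℕ → S → A → ℝ) (P : ℕ → Kernel (S × A) S)
    (π : ℕ → S → A → ℝ) (h : ℕ) : S → A → ℝ :=
  bellman H r P h (Vpi H r P π (h + 1))

/-- A (randomized, measurable) policy on a finite action set: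
`π_h(·|x)` is a probability vector for every `h, x`. -/
def IsPolicy {S A : Type*} [MeasurableSpace S] [Fintype A] (π : ℕ → S → A → ℝ) : Prop :=
  (∀ h x a, 0 ≤ π h x a) ∧ (∀ h x, ∑ a, π h x a = 1) ∧ ∀ h a, Measurable fun x => π h x a

/-- The distribution of `(x, a)` with `a ∼ π_h(·|x)`. -/
def polKer {S A : Type*} [MeasurableSpace S] [Fintype A] [MeasurableSpace A]
    (π : ℕ → S → A → ℝ) (h : ℕ) (x : S) : Measure (S × A) :=
  ∑ a, ENNReal.ofReal (π h x a) • Measure.dirac (x, a)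

/-- The law `P_h^π ν₁` of `(S_h, A_h)` when `(S_1,A_1) ∼ ν₁`, `S_{h+1} ∼ P_h(·|S_h,A_h)`
and `A_{h+1} ∼ π_{h+1}(·|S_{h+1})`. -/
def lawAt {S A : Type*} [MeasurableSpace S] [Fintype A] [MeasurableSpace A]
    (P : ℕ → Kernel (S × A) S) (π : ℕ → S → A → ℝ) (ν₁ : Measure (S × A)) :
    ℕ → Measure (S × A) :=
  fun h => Nat.rec (motive := fun _ => Measure (S × A)) ν₁
    (fun k μ => μ.bind fun z => ((P (k + 1)) z).bind (polKer π (k + 2))) (h - 1)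

/-- `L²(μ)` norm of a real function. -/
def l2 {α : Type*} [MeasurableSpace α] (μ : Measure α) (f : α → ℝ) : ℝ :=
  Real.sqrt (∫ z, f z ^ 2 ∂μ)

/-- The law of `S_h` under policy `π` starting from `S_1 = s`. -/
def stateLaw {S A : Type*} [MeasurableSpace S] [Fintype A] [MeasurableSpace A]
    (P : ℕ → Kernel (S × A) S) (π : ℕ → S → A → ℝ) (s : S) : ℕ → Measure S :=
  fun h => Nat.rec (motive := fun _ => Measure S) (Measure.dirac s)
    (fun k μ => μ.bind fun x => ∑ a, ENNReal.ofReal (π (k + 1) x a) • (P (k + 1)) (x, a))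
    (h - 1)

section AuxPDL

variable {S A : Type*} [MeasurableSpace S] [Fintype A] [Nonempty A] [MeasurableSpace A]
  {H : ℕ} {P : ℕ → Kernel (S × A) S} [∀ j, IsMarkovKernel (P j)]
  {r : ℕ → S → A → ℝ}

/-- Bounded measurable functions are integrable w.r.t. finite measures. -/
lemma integrable_of_bdd {α : Type*} [MeasurableSpace α] {μ : Measure α} [IsFiniteMeasure μ]
    {f : α → ℝ} (hf : Measurable f) {C : ℝ} (hC : ∀ x, |f x| ≤ C) : Integrable f μ :=
  ⟨hf.aestronglyMeasurable, HasFiniteIntegral.of_bounded (C := C) (ae_of_all _ fun x => hC x)⟩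

lemma int_mem_Icc {α : Type*} [MeasurableSpace α] {μ : Measure α} [IsProbabilityMeasure μ]
    {f : α → ℝ} (hf : Measurable f) {C : ℝ} (h0 : ∀ x, 0 ≤ f x) (hC : ∀ x, f x ≤ C) :
    (∫ x, f x ∂μ) ∈ Set.Icc (0 : ℝ) C := by
  have hint : Integrable f μ := integrable_of_bdd hf (C := C)
    (fun x => by rw [abs_of_nonneg (h0 x)]; exact hC x)
  constructor
  · exact integral_nonneg h0
  · calc ∫ x, f x ∂μ ≤ ∫ _, C ∂μ := integral_mono hint (integrable_const C) hC
      _ = C := by simp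

lemma meas_kernel_int (h : ℕ) {f : S → ℝ} (hf : Measurable f) (a : A) :
    Measurable fun x : S => ∫ y, f y ∂((P h) (x, a)) := by
  have h1 : StronglyMeasurable fun z : S × A => ∫ y, f y ∂((P h) z) := by
    have : StronglyMeasurable fun p : (S × A) × S => f p.2 :=
      (hf.comp measurable_snd).stronglyMeasurable
    exact this.integral_kernel_prod_right'
  exact h1.measurable.comp measurable_prodMk_right

lemma Vback_meas (hrmeas : ∀ j, Measurable fun z : S × A => r j z.1 z.2)
    {σ : ℕ → S → A → ℝ} (hσm : ∀ h a, Measurable fun x => σ h x a) (k : ℕ) :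
    Measurable (Vback H r P σ k) := by
  induction k with
  | zero => simpa [Vback] using measurable_const
  | succ k ih =>
    show Measurable fun x => ∑ a, σ (H - k) x a * bellman H r P (H - k) (Vback H r P σ k) x a
    refine Finset.measurable_sum _ fun a _ => (hσm _ a).mul ?_
    unfold bellman
    by_cases hk : H - k = H
    · simp only [if_pos hk]
      exact (hrmeas (H-k)).comp measurable_prodMk_right
    · simp only [if_neg hk]
      exact ((hrmeas _).comp measurable_prodMk_right).add (meas_kernel_int _ ih a)

lemma Vback_bdd (hr : ∀ j x a, r j x a ∈ Set.Icc (0 : ℝ) 1)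
    (hrmeas : ∀ j, Measurable fun z : S × A => r j z.1 z.2)
    {σ : ℕ → S → A → ℝ} (hσ : IsPolicy σ) (k : ℕ) (x : S) :
    Vback H r P σ k x ∈ Set.Icc (0 : ℝ) k := by
  obtain ⟨hσ0, hσ1, hσm⟩ := hσ
  induction k generalizing x with
  | zero => simp [Vback]
  | succ k ih =>
    have hb : ∀ a, bellman H r P (H - k) (Vback H r P σ k) x a ∈ Set.Icc (0 : ℝ) (k + 1) := by
      intro a
      unfold bellman
      by_cases hk : H - k = H
      · simp only [if_pos hk]
        refine ⟨(hr _ x a).1, le_trans (hr _ x a).2 ?_⟩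
        have : (0:ℝ) ≤ (k:ℝ) := Nat.cast_nonneg k
        push_cast
        linarith
      · simp only [if_neg hk]
        have hint : (∫ y, Vback H r P σ k y ∂((P (H - k)) (x, a))) ∈ Set.Icc (0 : ℝ) k :=
          int_mem_Icc (Vback_meas hrmeas hσm k) (fun y => (ih y).1) (fun y => (ih y).2)
        have h1 := (hr (H - k) x a).1
        have h2 := (hr (H - k) x a).2
        constructor
        · have := hint.1; linarith
        · have := hint.2; push_cast; linarith
    show (∑ a, σ (H - k) x a * bellman H r P (H - k) (Vback H r P σ k) x a) ∈ _
    constructor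
    · exact Finset.sum_nonneg fun a _ => mul_nonneg (hσ0 _ _ _) (hb a).1
    · calc (∑ a, σ (H - k) x a * bellman H r P (H - k) (Vback H r P σ k) x a)
          ≤ ∑ a, σ (H - k) x a * (k + 1) :=
            Finset.sum_le_sum fun a _ => mul_le_mul_of_nonneg_left (hb a).2 (hσ0 _ _ _)
        _ = (k + 1 : ℝ) := by rw [← Finset.sum_mul, hσ1 _ x, one_mul]
        _ = ((k + 1 : ℕ) : ℝ) := by push_cast; ring

lemma Vpi_meas (hrmeas : ∀ j, Measurable fun z : S × A => r j z.1 z.2)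
    {σ : ℕ → S → A → ℝ} (hσm : ∀ h a, Measurable fun x => σ h x a) (h : ℕ) :
    Measurable (Vpi H r P σ h) := Vback_meas hrmeas hσm _

lemma Vpi_bdd (hr : ∀ j x a, r j x a ∈ Set.Icc (0 : ℝ) 1)
    (hrmeas : ∀ j, Measurable fun z : S × A => r j z.1 z.2)
    {σ : ℕ → S → A → ℝ} (hσ : IsPolicy σ) {h : ℕ} (h1 : 1 ≤ h) (x : S) :
    Vpi H r P σ h x ∈ Set.Icc (0 : ℝ) H := by
  have := Vback_bdd (H := H) (P := P) hr hrmeas hσ (H + 1 - h) x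
  refine ⟨this.1, le_trans this.2 ?_⟩
  exact Nat.cast_le.mpr (by omega)

lemma Vpi_top {σ : ℕ → S → A → ℝ} : Vpi H r P σ (H + 1) = fun _ => 0 := by
  have : H + 1 - (H + 1) = 0 := by omega
  simp [Vpi, this, Vback]

lemma Qpi_meas (hrmeas : ∀ j, Measurable fun z : S × A => r j z.1 z.2)
    {σ : ℕ → S → A → ℝ} (hσm : ∀ h a, Measurable fun x => σ h x a) (h : ℕ) (a : A) :
    Measurable fun x => Qpi H r P σ h x a := by
  unfold Qpi bellman
  by_cases hk : h = H
  · simp only [if_pos hk]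
    exact (hrmeas h).comp measurable_prodMk_right
  · simp only [if_neg hk]
    exact ((hrmeas _).comp measurable_prodMk_right).add
      (meas_kernel_int _ (Vpi_meas hrmeas hσm _) a)

lemma Qpi_bdd (hr : ∀ j x a, r j x a ∈ Set.Icc (0 : ℝ) 1)
    (hrmeas : ∀ j, Measurable fun z : S × A => r j z.1 z.2)
    {σ : ℕ → S → A → ℝ} (hσ : IsPolicy σ) (h : ℕ) (x : S) (a : A) :
    Qpi H r P σ h x a ∈ Set.Icc (0 : ℝ) (H + 1) := by
  unfold Qpi bellman
  by_cases hk : h = H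
  · simp only [if_pos hk]
    refine ⟨(hr h x a).1, le_trans (hr h x a).2 ?_⟩
    have : (0:ℝ) ≤ (H:ℝ) := Nat.cast_nonneg H
    linarith
  · simp only [if_neg hk]
    have hint := int_mem_Icc (μ := (P h) (x, a)) (Vpi_meas (H := H) (P := P) hrmeas hσ.2.2 (h + 1))
      (fun y => (Vpi_bdd (H := H) (P := P) hr hrmeas hσ (h := h + 1) (by omega) y).1)
      (fun y => (Vpi_bdd (H := H) (P := P) hr hrmeas hσ (h := h + 1) (by omega) y).2)
    have h1 := (hr h x a).1
    have h2 := (hr h x a).2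
    exact ⟨by have := hint.1; linarith, by have := hint.2; linarith⟩

/-- Bellman equation: `V_h^σ(x) = Σ_a σ_h(a|x) Q_h^σ(x,a)` for `1 ≤ h ≤ H`. -/
lemma Vpi_eq_sum {σ : ℕ → S → A → ℝ} {h : ℕ} (h1 : 1 ≤ h) (h2 : h ≤ H) (x : S) :
    Vpi H r P σ h x = ∑ a, σ h x a * Qpi H r P σ h x a := by
  have e1 : H + 1 - h = (H - h) + 1 := by omega
  have e2 : H - (H - h) = h := by omega
  have e3 : H + 1 - (h + 1) = H - h := by omega
  show Vback H r P σ (H + 1 - h) x = _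
  rw [e1]
  show (∑ a, σ (H - (H - h)) x a *
      bellman H r P (H - (H - h)) (Vback H r P σ (H - h)) x a) = _
  rw [e2]
  simp only [Qpi, Vpi, e3]

/-- `Q_h^π − Q_h^{π'} = P_h (V_{h+1}^π − V_{h+1}^{π'})` for `h ≤ H`. -/
lemma Qpi_sub {σ σ' : ℕ → S → A → ℝ} {h : ℕ} (h2 : h ≤ H) (x : S) (a : A) :
    Qpi H r P σ h x a - Qpi H r P σ' h x a
      = (∫ y, Vpi H r P σ (h + 1) y ∂((P h) (x, a)))
        - ∫ y, Vpi H r P σ' (h + 1) y ∂((P h) (x, a)) := by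
  unfold Qpi bellman
  by_cases hk : h = H
  · simp only [if_pos hk]
    rw [hk, Vpi_top (σ := σ), Vpi_top (σ := σ')]
    simp
  · simp only [if_neg hk]
    ring

/-- The one-step transition measure for policy `σ` at step `h`. -/
def kerStep (P : ℕ → Kernel (S × A) S) (σ : ℕ → S → A → ℝ) (h : ℕ) (x : S) : Measure S :=
  ∑ a, ENNReal.ofReal (σ h x a) • (P h) (x, a)

lemma kerStep_meas {σ : ℕ → S → A → ℝ} (hσm : ∀ h a, Measurable fun x => σ h x a) (h : ℕ) :
    Measurable (kerStep P σ h) := by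
  refine Measure.measurable_of_measurable_coe _ fun t ht => ?_
  simp only [kerStep, Measure.finset_sum_apply, Measure.smul_apply, smul_eq_mul]
  exact Finset.measurable_sum _ fun a _ =>
    (ENNReal.measurable_ofReal.comp (hσm h a)).mul
      ((Kernel.measurable_coe (P h) ht).comp measurable_prodMk_right)

lemma kerStep_prob {σ : ℕ → S → A → ℝ} (hσ : IsPolicy σ) (h : ℕ) (x : S) :
    IsProbabilityMeasure (kerStep P σ h x) := by
  constructor
  simp only [kerStep, Measure.finset_sum_apply, Measure.smul_apply, smul_eq_mul,
    measure_univ, mul_one]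
  rw [← ENNReal.ofReal_sum_of_nonneg fun a _ => hσ.1 h x a, hσ.2.1 h x]
  simp

lemma integral_kerStep {σ : ℕ → S → A → ℝ} (hσ : IsPolicy σ) (h : ℕ) (x : S)
    {f : S → ℝ} (hf : Measurable f) {C : ℝ} (hC : ∀ y, |f y| ≤ C) :
    ∫ y, f y ∂(kerStep P σ h x) = ∑ a, σ h x a * ∫ y, f y ∂((P h) (x, a)) := by
  unfold kerStep
  rw [integral_finset_sum_measure (fun a _ =>
    (integrable_of_bdd hf hC).smul_measure ENNReal.ofReal_ne_top)]
  refine Finset.sum_congr rfl fun a _ => ?_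
  rw [integral_smul_measure, ENNReal.toReal_ofReal (hσ.1 h x a), smul_eq_mul]

lemma stateLaw_one {σ : ℕ → S → A → ℝ} (s : S) : stateLaw P σ s 1 = Measure.dirac s := rfl

lemma stateLaw_succ {σ : ℕ → S → A → ℝ} (s : S) {h : ℕ} (h1 : 1 ≤ h) :
    stateLaw P σ s (h + 1) = (stateLaw P σ s h).bind (kerStep P σ h) := by
  obtain ⟨k, rfl⟩ : ∃ k, h = k + 1 := ⟨h - 1, by omega⟩
  rfl

lemma stateLaw_prob {σ : ℕ → S → A → ℝ} (hσ : IsPolicy σ) (s : S) (h : ℕ) :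
    IsProbabilityMeasure (stateLaw P σ s h) := by
  induction h with
  | zero => exact Measure.dirac.isProbabilityMeasure
  | succ h ih =>
    rcases Nat.eq_zero_or_pos h with rfl | hpos
    · exact Measure.dirac.isProbabilityMeasure
    · rw [stateLaw_succ s hpos]
      constructor
      rw [Measure.bind_apply MeasurableSet.univ (kerStep_meas (P := P) hσ.2.2 h).aemeasurable]
      have : ∀ x, (kerStep P σ h x) Set.univ = 1 := fun x =>
        (kerStep_prob (P := P) hσ h x).measure_univ
      simp only [this, lintegral_one]
      exact ih.measure_univ

/-- Integral w.r.t. a bind, for nonnegative bounded measurable integrands. -/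
lemma integral_bind_prob {μ : Measure S} [IsProbabilityMeasure μ] {ν : S → Measure S}
    (hν : Measurable ν) (hνp : ∀ x, IsProbabilityMeasure (ν x))
    {g : S → ℝ} (hg : Measurable g) {C : ℝ} (h0 : ∀ y, 0 ≤ g y) (hC : ∀ y, g y ≤ C) :
    ∫ y, g y ∂(μ.bind ν) = ∫ x, ∫ y, g y ∂(ν x) ∂μ := by
  have hgm : Measurable fun y => ENNReal.ofReal (g y) := ENNReal.measurable_ofReal.comp hg
  have hFm : Measurable fun x => ∫⁻ y, ENNReal.ofReal (g y) ∂(ν x) :=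
    (Measure.measurable_lintegral hgm).comp hν
  have hFlt : ∀ x, (∫⁻ y, ENNReal.ofReal (g y) ∂(ν x)) < ∞ := by
    intro x
    calc (∫⁻ y, ENNReal.ofReal (g y) ∂(ν x)) ≤ ∫⁻ _, ENNReal.ofReal C ∂(ν x) :=
          lintegral_mono fun y => ENNReal.ofReal_le_ofReal (hC y)
      _ = ENNReal.ofReal C := by rw [lintegral_const, (hνp x).measure_univ, mul_one]
      _ < ∞ := ENNReal.ofReal_lt_top
  rw [integral_eq_lintegral_of_nonneg_ae (ae_of_all _ h0) hg.aestronglyMeasurable,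
    Measure.lintegral_bind hν.aemeasurable hgm.aemeasurable]
  rw [show (∫ x, ∫ y, g y ∂(ν x) ∂μ)
      = ∫ x, (∫⁻ y, ENNReal.ofReal (g y) ∂(ν x)).toReal ∂μ from
    integral_congr_ae (ae_of_all _ fun x =>
      integral_eq_lintegral_of_nonneg_ae (ae_of_all _ h0) hg.aestronglyMeasurable)]
  exact (integral_toReal hFm.aemeasurable (ae_of_all _ hFlt)).symm

end AuxPDL

/-- Performance Difference Lemma: for any two policies `π, π'` and any state `s`,
`V_1^π(s) − V_1^{π'}(s)
  = E_{π'}[ Σ_{h=1}^H ⟨Q_h^π(S_h,·), π_h(·|S_h) − π'_h(·|S_h)⟩_A | S_1 = s ]`,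
the expectation being over the trajectory generated by `π'` from `S_1 = s`. -/
theorem stmt7 {S A : Type*} [MeasurableSpace S] [Fintype A] [Nonempty A] [MeasurableSpace A]
    (H : ℕ) (hH : 1 ≤ H)
    (P : ℕ → Kernel (S × A) S) [∀ j, IsMarkovKernel (P j)]
    (r : ℕ → S → A → ℝ) (hr : ∀ j x a, r j x a ∈ Set.Icc (0 : ℝ) 1)
    (hrmeas : ∀ j, Measurable fun z : S × A => r j z.1 z.2)
    (π π' : ℕ → S → A → ℝ) (hπ : IsPolicy π) (hπ' : IsPolicy π') (s : S) :
    Vpi H r P π 1 s - Vpi H r P π' 1 s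
      = ∑ h ∈ Finset.Icc 1 H,
          ∫ x, (∑ a, Qpi H r P π h x a * (π h x a - π' h x a)) ∂(stateLaw P π' s h) := by
  classical
  have hprob : ∀ h, IsProbabilityMeasure (stateLaw P π' s h) := stateLaw_prob hπ' s
  have hπle1 : ∀ (σ : ℕ → S → A → ℝ), IsPolicy σ → ∀ h x a, σ h x a ≤ 1 := by
    intro σ hσ h x a
    calc σ h x a ≤ ∑ b, σ h x b :=
          Finset.single_le_sum (fun b _ => hσ.1 h x b) (Finset.mem_univ a)
      _ = 1 := hσ.2.1 h x
  have step : ∀ h, 1 ≤ h → h ≤ H →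
      (∫ x, Vpi H r P π h x ∂(stateLaw P π' s h))
        - (∫ x, Vpi H r P π' h x ∂(stateLaw P π' s h))
      = (∫ x, (∑ a, Qpi H r P π h x a * (π h x a - π' h x a)) ∂(stateLaw P π' s h))
        + ((∫ x, Vpi H r P π (h + 1) x ∂(stateLaw P π' s (h + 1)))
           - ∫ x, Vpi H r P π' (h + 1) x ∂(stateLaw P π' s (h + 1))) := by
    intro h h1 h2
    haveI := hprob h
    have hQm : ∀ a, Measurable fun x => Qpi H r P π h x a := Qpi_meas (H := H) (P := P) hrmeas hπ.2.2 h
    have hQb : ∀ x a, Qpi H r P π h x a ∈ Set.Icc (0 : ℝ) (H + 1) := Qpi_bdd (H := H) (P := P) hr hrmeas hπ h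
    have hπd : ∀ x a, |π h x a - π' h x a| ≤ 1 := by
      intro x a
      rw [abs_le]
      constructor
      · have := hπle1 π' hπ' h x a; have := hπ.1 h x a; linarith
      · have := hπle1 π hπ h x a; have := hπ'.1 h x a; linarith
    have hVm := Vpi_meas (H := H) (P := P) hrmeas hπ.2.2 (h + 1)
    have hV'm := Vpi_meas (H := H) (P := P) hrmeas hπ'.2.2 (h + 1)
    have hVb := Vpi_bdd (H := H) (P := P) hr hrmeas hπ (h := h + 1) (by omega)
    have hV'b := Vpi_bdd (H := H) (P := P) hr hrmeas hπ' (h := h + 1) (by omega)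
    have hVabs : ∀ y, |Vpi H r P π (h + 1) y| ≤ (H : ℝ) := fun y =>
      abs_le.mpr ⟨by linarith [(hVb y).1], (hVb y).2⟩
    have hV'abs : ∀ y, |Vpi H r P π' (h + 1) y| ≤ (H : ℝ) := fun y =>
      abs_le.mpr ⟨by linarith [(hV'b y).1], (hV'b y).2⟩
    -- pointwise decomposition
    have hpt : ∀ x, Vpi H r P π h x - Vpi H r P π' h x
        = (∑ a, Qpi H r P π h x a * (π h x a - π' h x a))
          + ((∫ y, Vpi H r P π (h + 1) y ∂(kerStep P π' h x))
             - ∫ y, Vpi H r P π' (h + 1) y ∂(kerStep P π' h x)) := by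
      intro x
      rw [Vpi_eq_sum (σ := π) h1 h2, Vpi_eq_sum (σ := π') h1 h2,
        integral_kerStep hπ' h x hVm hVabs, integral_kerStep hπ' h x hV'm hV'abs,
        ← Finset.sum_sub_distrib, ← Finset.sum_sub_distrib, ← Finset.sum_add_distrib]
      refine Finset.sum_congr rfl fun a _ => ?_
      have hq := Qpi_sub (r := r) (P := P) (σ := π) (σ' := π') h2 x a
      linear_combination (π' h x a) * hq
    -- measurability and integrability of the pieces
    have hAm : Measurable fun x => ∑ a, Qpi H r P π h x a * (π h x a - π' h x a) :=
      Finset.measurable_sum _ fun a _ => (hQm a).mul ((hπ.2.2 h a).sub (hπ'.2.2 h a))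
    have hAb : ∀ x, |∑ a, Qpi H r P π h x a * (π h x a - π' h x a)|
        ≤ (Fintype.card A : ℝ) * ((H : ℝ) + 1) := by
      intro x
      calc |∑ a, Qpi H r P π h x a * (π h x a - π' h x a)|
          ≤ ∑ a, |Qpi H r P π h x a * (π h x a - π' h x a)| :=
            Finset.abs_sum_le_sum_abs _ _
        _ ≤ ∑ _a : A, ((H : ℝ) + 1) * 1 := by
            refine Finset.sum_le_sum fun a _ => ?_
            rw [abs_mul]
            refine mul_le_mul ?_ (hπd x a) (abs_nonneg _) (by positivity)
            rw [abs_of_nonneg (hQb x a).1]; exact (hQb x a).2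
        _ = (Fintype.card A : ℝ) * ((H : ℝ) + 1) := by
            rw [Finset.sum_const, Finset.card_univ, nsmul_eq_mul]; ring
    have hBVeq : (fun x => ∫ y, Vpi H r P π (h + 1) y ∂(kerStep P π' h x))
        = fun x => ∑ a, π' h x a * ∫ y, Vpi H r P π (h + 1) y ∂((P h) (x, a)) :=
      funext fun x => integral_kerStep hπ' h x hVm hVabs
    have hBV'eq : (fun x => ∫ y, Vpi H r P π' (h + 1) y ∂(kerStep P π' h x))
        = fun x => ∑ a, π' h x a * ∫ y, Vpi H r P π' (h + 1) y ∂((P h) (x, a)) :=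
      funext fun x => integral_kerStep hπ' h x hV'm hV'abs
    have hBVm : Measurable fun x => ∫ y, Vpi H r P π (h + 1) y ∂(kerStep P π' h x) := by
      rw [hBVeq]
      exact Finset.measurable_sum _ fun a _ => (hπ'.2.2 h a).mul (meas_kernel_int h hVm a)
    have hBV'm : Measurable fun x => ∫ y, Vpi H r P π' (h + 1) y ∂(kerStep P π' h x) := by
      rw [hBV'eq]
      exact Finset.measurable_sum _ fun a _ => (hπ'.2.2 h a).mul (meas_kernel_int h hV'm a)
    have hBVb : ∀ x, |∫ y, Vpi H r P π (h + 1) y ∂(kerStep P π' h x)| ≤ (H : ℝ) := by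
      intro x
      haveI := kerStep_prob (P := P) hπ' h x
      have := int_mem_Icc (μ := kerStep P π' h x) hVm (fun y => (hVb y).1) (fun y => (hVb y).2)
      exact abs_le.mpr ⟨by linarith [this.1], this.2⟩
    have hBV'b : ∀ x, |∫ y, Vpi H r P π' (h + 1) y ∂(kerStep P π' h x)| ≤ (H : ℝ) := by
      intro x
      haveI := kerStep_prob (P := P) hπ' h x
      have := int_mem_Icc (μ := kerStep P π' h x) hV'm
        (fun y => (hV'b y).1) (fun y => (hV'b y).2)
      exact abs_le.mpr ⟨by linarith [this.1], this.2⟩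
    have intA : Integrable (fun x => ∑ a, Qpi H r P π h x a * (π h x a - π' h x a))
        (stateLaw P π' s h) := integrable_of_bdd hAm hAb
    have intBV : Integrable (fun x => ∫ y, Vpi H r P π (h + 1) y ∂(kerStep P π' h x))
        (stateLaw P π' s h) := integrable_of_bdd hBVm hBVb
    have intBV' : Integrable (fun x => ∫ y, Vpi H r P π' (h + 1) y ∂(kerStep P π' h x))
        (stateLaw P π' s h) := integrable_of_bdd hBV'm hBV'b
    have intV : Integrable (Vpi H r P π h) (stateLaw P π' s h) :=
      integrable_of_bdd (Vpi_meas hrmeas hπ.2.2 h)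
        (fun x => abs_le.mpr ⟨by linarith [(Vpi_bdd (H := H) (P := P) hr hrmeas hπ h1 x).1],
          (Vpi_bdd (H := H) (P := P) hr hrmeas hπ h1 x).2⟩)
    have intV' : Integrable (Vpi H r P π' h) (stateLaw P π' s h) :=
      integrable_of_bdd (Vpi_meas hrmeas hπ'.2.2 h)
        (fun x => abs_le.mpr ⟨by linarith [(Vpi_bdd (H := H) (P := P) hr hrmeas hπ' h1 x).1],
          (Vpi_bdd (H := H) (P := P) hr hrmeas hπ' h1 x).2⟩)
    -- rewrite the (h+1)-integrals via bind
    have hbind : stateLaw P π' s (h + 1) = (stateLaw P π' s h).bind (kerStep P π' h) :=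
      stateLaw_succ s h1
    have hV1 : (∫ x, Vpi H r P π (h + 1) x ∂(stateLaw P π' s (h + 1)))
        = ∫ x, ∫ y, Vpi H r P π (h + 1) y ∂(kerStep P π' h x) ∂(stateLaw P π' s h) := by
      rw [hbind]
      exact integral_bind_prob (kerStep_meas hπ'.2.2 h) (kerStep_prob hπ' h) hVm
        (fun y => (hVb y).1) (fun y => (hVb y).2)
    have hV1' : (∫ x, Vpi H r P π' (h + 1) x ∂(stateLaw P π' s (h + 1)))
        = ∫ x, ∫ y, Vpi H r P π' (h + 1) y ∂(kerStep P π' h x) ∂(stateLaw P π' s h) := by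
      rw [hbind]
      exact integral_bind_prob (kerStep_meas hπ'.2.2 h) (kerStep_prob hπ' h) hV'm
        (fun y => (hV'b y).1) (fun y => (hV'b y).2)
    have lhs_eq : (∫ x, Vpi H r P π h x ∂(stateLaw P π' s h))
        - ∫ x, Vpi H r P π' h x ∂(stateLaw P π' s h)
        = ∫ x, (Vpi H r P π h x - Vpi H r P π' h x) ∂(stateLaw P π' s h) :=
      (integral_sub intV intV').symm
    have intB : Integrable (fun x => (∫ y, Vpi H r P π (h + 1) y ∂(kerStep P π' h x))
        - ∫ y, Vpi H r P π' (h + 1) y ∂(kerStep P π' h x)) (stateLaw P π' s h) :=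
      intBV.sub intBV'
    rw [hV1, hV1', lhs_eq, integral_congr_ae (ae_of_all _ hpt),
      integral_add intA intB, integral_sub intBV intBV']
  -- telescoping
  have claim : ∀ k, k ≤ H →
      (∫ x, Vpi H r P π (H + 1 - k) x ∂(stateLaw P π' s (H + 1 - k)))
        - (∫ x, Vpi H r P π' (H + 1 - k) x ∂(stateLaw P π' s (H + 1 - k)))
      = ∑ j ∈ Finset.Icc (H + 1 - k) H,
          ∫ x, (∑ a, Qpi H r P π j x a * (π j x a - π' j x a)) ∂(stateLaw P π' s j) := by
    intro k
    induction k with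
    | zero =>
      intro _
      rw [Nat.sub_zero, Finset.Icc_eq_empty (by omega), Finset.sum_empty]
      simp only [Vpi_top]
      simp
    | succ k ih =>
      intro hk
      have e : H + 1 - (k + 1) = H - k := by omega
      have e2 : (H - k) + 1 = H + 1 - k := by omega
      have e3 : Finset.Ioc (H - k) H = Finset.Icc (H + 1 - k) H := by
        rw [← Finset.Icc_succ_left_eq_Ioc, Order.succ_eq_add_one]
        congr 1
      rw [e, step (H - k) (by omega) (by omega), e2, ih (by omega),
        Finset.Icc_eq_cons_Ioc (by omega : H - k ≤ H), Finset.sum_cons, e3]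
  have hfin := claim H le_rfl
  have e : H + 1 - H = 1 := by omega
  rw [e] at hfin
  rw [show stateLaw P π' s 1 = Measure.dirac s from rfl,
    integral_dirac' _ s (Vpi_meas hrmeas hπ.2.2 1).stronglyMeasurable,
    integral_dirac' _ s (Vpi_meas hrmeas hπ'.2.2 1).stronglyMeasurable] at hfin
  exact hfin

end
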